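/- arXiv:2212.08100 — 5 statements merged into one kernel-verified Lean document; each statement's English description precedes it below -/
import Mathlib

section
/- Let m ≥ 1, let α_1, ..., α_m be positive real numbers and let b_0, b_1, ..., b_m be positive real numbers; set c_j = b_j/b_0 for j ∈ {1, ..., m}. Let A^N be the (m+1)×(m+1) complex matrix with rows and columns indexed by 0, 1, ..., m whose entries are: A_{00} = Σ_{k=1}^m α_k b_k b_0^{-1}; A_{0j} = −α_j b_j b_0^{-1} for j ∈ {1, ..., m}; A_{j0} = −α_j and A_{jj} = α_j for j ∈ {1, ..., m}; and A_{ji} = 0 for i, j ∈ {1, ..., m} with i ≠ j. Then for every λ ∈ ℂ one has the characteristic polynomial identity det(λ·I_{m+1} − A^N) = λ · ( Π_{j=1}^m (λ − α_j) − Σ_{j=1}^m c_j α_j Π_{i ∈ {1,...,m}, i ≠ j} (λ − α_i) ). -/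
theorem diag_rank1_det (m : ℕ) (d w : Fin m → ℂ) (hd : ∀ j, d j ≠ 0) :
    (Matrix.diagonal d + Matrix.replicateCol Unit (fun _ => (1:ℂ)) * Matrix.replicateRow Unit w).det
      = ∏ j, d j + ∑ j, w j * ∏ i ∈ Finset.univ.erase j, d i := by
  have hunit : IsUnit (Matrix.diagonal d).det := by
    simp only [Matrix.det_diagonal, isUnit_iff_ne_zero, Finset.prod_ne_zero_iff]
    exact fun j _ => hd j
  have hinv : (Matrix.diagonal d)⁻¹ = Matrix.diagonal (fun j => (d j)⁻¹) :=
    Matrix.inv_eq_right_inv (by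
      rw [Matrix.diagonal_mul_diagonal,
        show (fun i => d i * (d i)⁻¹) = fun _ => (1:ℂ) from funext fun i => mul_inv_cancel₀ (hd i),
        Matrix.diagonal_one])
  rw [Matrix.det_add_replicateCol_mul_replicateRow hunit]
  rw [Matrix.det_diagonal, Matrix.det_unique, hinv]
  simp only [Matrix.add_apply, Matrix.one_apply_eq, Matrix.mul_apply, Matrix.replicateRow_apply,
    Matrix.replicateCol_apply, Matrix.diagonal_apply, mul_ite, mul_zero, Finset.sum_ite_eq,
    Finset.sum_ite_eq', Finset.mem_univ, if_true, mul_one]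
  rw [mul_add, mul_one, Finset.mul_sum]
  congr 1
  refine Finset.sum_congr rfl fun j _ => ?_
  rw [← Finset.mul_prod_erase Finset.univ d (Finset.mem_univ j)]
  field_simp [hd j]
theorem matrix_AN_pq
    (m : ℕ) (α : Fin m → ℝ) (b : Fin (m + 1) → ℝ) (c : Fin m → ℝ)
    (hcC : ∀ j, (c j : ℂ) = (b j.succ : ℂ) * (b 0 : ℂ)⁻¹)
    (A : Matrix (Fin (m + 1)) (Fin (m + 1)) ℂ)
    (hA00 : A 0 0 = ∑ k : Fin m, (α k : ℂ) * (b k.succ : ℂ) * (b 0 : ℂ)⁻¹)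
    (hA0j : ∀ j : Fin m, A 0 j.succ = -((α j : ℂ) * (b j.succ : ℂ) * (b 0 : ℂ)⁻¹))
    (hAj0 : ∀ j : Fin m, A j.succ 0 = -(α j : ℂ))
    (hAjj : ∀ j : Fin m, A j.succ j.succ = (α j : ℂ))
    (hAji : ∀ i j : Fin m, i ≠ j → A j.succ i.succ = 0) :
    A = (Matrix.of fun i j => if i = j.succ then (α j : ℂ) else if i = 0 then -((α j : ℂ) * (c j : ℂ)) else 0
          : Matrix (Fin (m+1)) (Fin m) ℂ) *
        (Matrix.of fun j i => if i = j.succ then 1 else if i = 0 then -1 else 0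
          : Matrix (Fin m) (Fin (m+1)) ℂ) := by
  ext i i'
  rw [Matrix.mul_apply]
  induction i using Fin.cases with
  | zero =>
    induction i' using Fin.cases with
    | zero =>
      rw [hA00]
      refine Finset.sum_congr rfl fun j _ => ?_
      simp only [Matrix.of_apply, if_neg (Fin.succ_ne_zero j).symm, if_pos rfl, if_true]
      rw [mul_assoc, ← hcC j]
      ring
    | succ k =>
      rw [hA0j k, Finset.sum_eq_single k]
      · simp only [Matrix.of_apply, if_neg (Fin.succ_ne_zero k).symm, if_pos rfl, if_true,
          if_neg (Fin.succ_ne_zero k)]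
        rw [mul_assoc, ← hcC k]
        ring
      · intro j _ hjk
        simp only [Matrix.of_apply, if_neg (Fin.succ_ne_zero j).symm, if_pos rfl,
          if_neg (fun h : (k.succ : Fin (m+1)) = j.succ => hjk (Fin.succ_inj.mp h).symm),
          if_neg (Fin.succ_ne_zero k)]
        ring
      · simp
  | succ k =>
    induction i' using Fin.cases with
    | zero =>
      rw [hAj0 k, Finset.sum_eq_single k]
      · simp only [Matrix.of_apply, if_pos rfl, if_true, if_neg (Fin.succ_ne_zero k).symm]
        ring
      · intro j _ hjk
        simp only [Matrix.of_apply, if_neg (fun h : (k.succ : Fin (m+1)) = j.succ => hjk (Fin.succ_inj.mp h).symm),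
          if_neg (Fin.succ_ne_zero k)]
        ring
      · simp
    | succ l =>
      by_cases hkl : k = l
      · subst hkl
        rw [hAjj k, Finset.sum_eq_single k]
        · simp only [Matrix.of_apply, if_pos rfl, if_true]
          ring
        · intro j _ hjk
          simp only [Matrix.of_apply, if_neg (fun h : (k.succ : Fin (m+1)) = j.succ => hjk (Fin.succ_inj.mp h).symm),
            if_neg (Fin.succ_ne_zero k)]
          ring
        · simp
      · rw [hAji l k (Ne.symm hkl), Finset.sum_eq_zero]
        intro j _
        by_cases hjk : j = k
        · subst hjk
          simp only [Matrix.of_apply, if_pos rfl,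
            if_neg (fun h : (l.succ : Fin (m+1)) = j.succ => hkl (Fin.succ_inj.mp h).symm),
            if_neg (Fin.succ_ne_zero l)]
          ring
        · simp only [Matrix.of_apply, if_neg (fun h : (k.succ : Fin (m+1)) = j.succ => hjk (Fin.succ_inj.mp h).symm),
            if_neg (Fin.succ_ne_zero k)]
          ring

theorem harrow_eq (m : ℕ) (α c : Fin m → ℝ) (lam : ℂ) :
    lam • (1 : Matrix (Fin m) (Fin m) ℂ) -
      (Matrix.of fun (j : Fin m) (i : Fin (m+1)) =>
          if i = j.succ then (1:ℂ) else if i = 0 then -1 else 0) *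
      (Matrix.of fun (i : Fin (m+1)) (j : Fin m) =>
          if i = j.succ then (α j : ℂ) else if i = 0 then -((α j : ℂ) * (c j : ℂ)) else 0) =
    Matrix.diagonal (fun j => lam - (α j : ℂ)) +
      Matrix.replicateCol Unit (fun _ => (1:ℂ)) *
      Matrix.replicateRow Unit (fun j => -((α j : ℂ) * (c j : ℂ))) := by
  ext j j'
  simp only [Matrix.sub_apply, Matrix.add_apply, Matrix.smul_apply, Matrix.one_apply,
    Matrix.mul_apply, Matrix.of_apply, Matrix.diagonal_apply, Matrix.replicateCol_apply,
    Matrix.replicateRow_apply, Fin.sum_univ_succ, Fin.succ_ne_zero, if_false,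
    Finset.univ_unique, Finset.sum_singleton, smul_eq_mul, mul_ite, mul_one, mul_zero,
    if_neg (Fin.succ_ne_zero j).symm, Fin.succ_inj, one_mul]
  by_cases hjj : j = j'
  · subst hjj
    simp [(Fin.succ_ne_zero j).symm]
    ring
  · simp [hjj, Ne.symm hjj, (Fin.succ_ne_zero j').symm]

theorem matrix_AN_char_poly
    (m : ℕ) (hm : 1 ≤ m) (α : Fin m → ℝ) (b : Fin (m + 1) → ℝ) (c : Fin m → ℝ)
    (hαpos : ∀ j, 0 < α j) (hbpos : ∀ j, 0 < b j)
    (hc : ∀ j, c j = b j.succ / b 0)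
    (A : Matrix (Fin (m + 1)) (Fin (m + 1)) ℂ)
    (hA00 : A 0 0 = ∑ k : Fin m, (α k : ℂ) * (b k.succ : ℂ) * (b 0 : ℂ)⁻¹)
    (hA0j : ∀ j : Fin m, A 0 j.succ = -((α j : ℂ) * (b j.succ : ℂ) * (b 0 : ℂ)⁻¹))
    (hAj0 : ∀ j : Fin m, A j.succ 0 = -(α j : ℂ))
    (hAjj : ∀ j : Fin m, A j.succ j.succ = (α j : ℂ))
    (hAji : ∀ i j : Fin m, i ≠ j → A j.succ i.succ = 0) :
    ∀ lam : ℂ,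
      Matrix.det (lam • (1 : Matrix (Fin (m + 1)) (Fin (m + 1)) ℂ) - A) =
        lam * (∏ j : Fin m, (lam - (α j : ℂ)) -
          ∑ j : Fin m, (c j : ℂ) * (α j : ℂ) *
            ∏ i ∈ Finset.univ.erase j, (lam - (α i : ℂ))) := by
  have hcC : ∀ j, (c j : ℂ) = (b j.succ : ℂ) * (b 0 : ℂ)⁻¹ := by
    intro j; rw [hc j]; push_cast; rw [div_eq_mul_inv]
  have hPQ := matrix_AN_pq m α b c hcC A hA00 hA0j hAj0 hAjj hAji
  set P : Matrix (Fin (m+1)) (Fin m) ℂ :=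
    Matrix.of fun i j => if i = j.succ then (α j : ℂ) else
      if i = 0 then -((α j : ℂ) * (c j : ℂ)) else 0 with hPdef
  set Q : Matrix (Fin m) (Fin (m+1)) ℂ :=
    Matrix.of fun j i => if i = j.succ then 1 else if i = 0 then -1 else 0 with hQdef
  have key : ∀ lam : ℂ, lam ≠ 0 → (∀ j, lam ≠ (α j : ℂ)) →
      Matrix.det (lam • (1 : Matrix (Fin (m + 1)) (Fin (m + 1)) ℂ) - A) =
        lam * (∏ j : Fin m, (lam - (α j : ℂ)) -
          ∑ j : Fin m, (c j : ℂ) * (α j : ℂ) *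
            ∏ i ∈ Finset.univ.erase j, (lam - (α i : ℂ))) := by
    intro lam hlam hlama
    have hd : ∀ j, lam - (α j : ℂ) ≠ 0 := fun j => sub_ne_zero.2 (hlama j)
    calc Matrix.det (lam • (1 : Matrix (Fin (m + 1)) (Fin (m + 1)) ℂ) - A)
        = Matrix.det (lam • (1 - (lam⁻¹ • P) * Q)) := by
          rw [hPQ, Matrix.smul_mul, smul_sub, smul_smul, mul_inv_cancel₀ hlam, one_smul]
      _ = lam ^ (m+1) * Matrix.det (1 - (lam⁻¹ • P) * Q) := by
          rw [Matrix.det_smul, Fintype.card_fin]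
      _ = lam ^ (m+1) * Matrix.det (1 - Q * (lam⁻¹ • P)) := by
          rw [Matrix.det_one_sub_mul_comm]
      _ = lam * (lam ^ m * Matrix.det (1 - lam⁻¹ • (Q * P))) := by
          rw [Matrix.mul_smul]; ring
      _ = lam * Matrix.det (lam • (1 - lam⁻¹ • (Q * P))) := by
          rw [Matrix.det_smul, Fintype.card_fin]
      _ = lam * Matrix.det (lam • (1 : Matrix (Fin m) (Fin m) ℂ) - Q * P) := by
          rw [smul_sub, smul_smul, mul_inv_cancel₀ hlam, one_smul]
      _ = lam * Matrix.det (Matrix.diagonal (fun j => lam - (α j : ℂ)) +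
            Matrix.replicateCol Unit (fun _ => (1:ℂ)) *
            Matrix.replicateRow Unit (fun j => -((α j : ℂ) * (c j : ℂ)))) := by
          rw [hPdef, hQdef, harrow_eq]
      _ = lam * (∏ j : Fin m, (lam - (α j : ℂ)) +
            ∑ j : Fin m, (-((α j : ℂ) * (c j : ℂ))) *
              ∏ i ∈ Finset.univ.erase j, (lam - (α i : ℂ))) := by
          rw [diag_rank1_det m _ _ hd]
      _ = lam * (∏ j : Fin m, (lam - (α j : ℂ)) -
            ∑ j : Fin m, (c j : ℂ) * (α j : ℂ) *
              ∏ i ∈ Finset.univ.erase j, (lam - (α i : ℂ))) := by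
          congr 1
          rw [sub_eq_add_neg, ← Finset.sum_neg_distrib]
          congr 1
          exact Finset.sum_congr rfl fun j _ => by ring
  have hf : Continuous fun lam : ℂ =>
      Matrix.det (lam • (1 : Matrix (Fin (m + 1)) (Fin (m + 1)) ℂ) - A) :=
    Continuous.matrix_det ((continuous_id.smul continuous_const).sub continuous_const)
  have hg : Continuous fun lam : ℂ =>
      lam * (∏ j : Fin m, (lam - (α j : ℂ)) -
        ∑ j : Fin m, (c j : ℂ) * (α j : ℂ) *
          ∏ i ∈ Finset.univ.erase j, (lam - (α i : ℂ))) := by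
    apply continuous_id.mul
    apply Continuous.sub
    · exact continuous_finset_prod _ fun j _ => continuous_id.sub continuous_const
    · exact continuous_finset_sum _ fun j _ =>
        (continuous_const.mul (continuous_finset_prod _ fun i _ => continuous_id.sub continuous_const))
  have hScount : (insert (0:ℂ) (Set.range fun j => ((α j : ℝ) : ℂ))).Countable :=
    ((Set.finite_range _).insert 0).countable
  have hdense : Dense ((insert (0:ℂ) (Set.range fun j => ((α j : ℝ) : ℂ)))ᶜ) :=
    hScount.dense_compl ℂ
  have hfg := Continuous.ext_on hdense hf hg (fun x hx => by
    simp only [Set.mem_compl_iff, Set.mem_insert_iff, Set.mem_range, not_or, not_exists] at hx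
    exact key x hx.1 (fun j h => hx.2 j h.symm))
  exact fun lam => congrFun hfg lam
end

section
/- Let m ≥ 1, let 0 < α_1 < α_2 < ... < α_m be real numbers and let b_0, b_1, ..., b_m be positive real numbers; set c_j = b_j/b_0 and define F(λ) = 1 + Σ_{j=1}^m c_j α_j/(α_j − λ) for λ ∈ ℝ \ {α_1, ..., α_m}. Let A^N be the (m+1)×(m+1) complex matrix with rows and columns indexed by 0, 1, ..., m whose entries are: A_{00} = Σ_{k=1}^m α_k b_k b_0^{-1}; A_{0j} = −α_j b_j b_0^{-1} for j ∈ {1, ..., m}; A_{j0} = −α_j and A_{jj} = α_j for j ∈ {1, ..., m}; and A_{ji} = 0 for i, j ∈ {1, ..., m} with i ≠ j. Then A^N has exactly m+1 distinct eigenvalues, all of them real, and the set of eigenvalues of A^N equals {0} ∪ {λ ∈ ℝ \ {α_1, ..., α_m} : F(λ) = 0}. -/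
open Polynomial Finset

noncomputable def hPoly {m : ℕ} (K : Type*) [Field K] (a w : Fin m → K) : K[X] :=
  ∏ j, (X - C (a j)) - ∑ j, C (w j) * ∏ k ∈ Finset.univ.erase j, (X - C (a k))

lemma hPoly_eval {m : ℕ} (K : Type*) [Field K] (a w : Fin m → K) (z : K) :
    (hPoly K a w).eval z =
      ∏ j, (z - a j) - ∑ j, w j * ∏ k ∈ Finset.univ.erase j, (z - a k) := by
  simp [hPoly, eval_prod, eval_finset_sum]

lemma hPoly_deg1 {m : ℕ} (K : Type*) [Field K] (a : Fin m → K) :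
    (∏ j : Fin m, (X - C (a j))).degree = ((m : ℕ) : WithBot ℕ) := by
  rw [degree_prod]
  simp [degree_X_sub_C]

lemma hPoly_deg2 {m : ℕ} (hm : 1 ≤ m) (K : Type*) [Field K] (a w : Fin m → K) :
    (∑ j, C (w j) * ∏ k ∈ Finset.univ.erase j, (X - C (a k))).degree
      < ((m : ℕ) : WithBot ℕ) := by
  refine lt_of_le_of_lt (degree_sum_le _ _) ?_
  rw [Finset.sup_lt_iff (by exact_mod_cast WithBot.bot_lt_coe _)]
  intro j _
  refine lt_of_le_of_lt (degree_mul_le _ _) ?_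
  have h2 : (∏ k ∈ Finset.univ.erase j, (X - C (a k))).degree ≤ ((m - 1 : ℕ) : WithBot ℕ) := by
    refine le_trans (degree_prod_le _ _) ?_
    simp only [degree_X_sub_C]
    rw [Finset.sum_const, Finset.card_erase_of_mem (Finset.mem_univ _), Finset.card_univ,
      Fintype.card_fin]
    simp
  calc (C (w j)).degree + (∏ k ∈ Finset.univ.erase j, (X - C (a k))).degree
      ≤ 0 + ((m - 1 : ℕ) : WithBot ℕ) := add_le_add degree_C_le h2
    _ < (m : ℕ) := by
        rw [zero_add]
        exact_mod_cast Nat.sub_lt (by omega) one_pos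

lemma hPoly_monic {m : ℕ} (hm : 1 ≤ m) (K : Type*) [Field K] (a w : Fin m → K) :
    (hPoly K a w).Monic :=
  Polynomial.Monic.sub_of_left (monic_prod_of_monic _ _ fun i _ => monic_X_sub_C _)
    (by rw [hPoly_deg1]; exact hPoly_deg2 hm K a w)

lemma hPoly_natDegree {m : ℕ} (hm : 1 ≤ m) (K : Type*) [Field K] (a w : Fin m → K) :
    (hPoly K a w).natDegree = m := by
  have h : (hPoly K a w).degree = ((m : ℕ) : WithBot ℕ) := by
    rw [hPoly, degree_sub_eq_left_of_degree_lt (by rw [hPoly_deg1]; exact hPoly_deg2 hm K a w),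
      hPoly_deg1]
  exact natDegree_eq_of_degree_eq_some h

lemma hPoly_map {m : ℕ} (a w : Fin m → ℝ) :
    (hPoly ℝ a w).map (algebraMap ℝ ℂ) =
      hPoly ℂ (fun j => (a j : ℂ)) (fun j => (w j : ℂ)) := by
  simp [hPoly, Polynomial.map_prod, Polynomial.map_sum]

lemma hPoly_eval_ne {m : ℕ} {K : Type*} [Field K] (a w : Fin m → K) (z : K)
    (hz : ∀ j, z ≠ a j) :
    (hPoly K a w).eval z = (∏ j, (z - a j)) * (1 - ∑ j, w j / (z - a j)) := by
  rw [hPoly_eval, mul_sub, mul_one, Finset.mul_sum]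
  congr 1
  refine Finset.sum_congr rfl fun j _ => ?_
  rw [← Finset.mul_prod_erase _ _ (Finset.mem_univ j)]
  have : z - a j ≠ 0 := sub_ne_zero.2 (hz j)
  field_simp

lemma eval_charpoly' {n : ℕ} (A : Matrix (Fin n) (Fin n) ℂ) (z : ℂ) :
    A.charpoly.eval z = (z • (1 : Matrix (Fin n) (Fin n) ℂ) - A).det := by
  rw [Matrix.charpoly, ← Polynomial.coe_evalRingHom, RingHom.map_det]
  congr 1
  ext i j
  by_cases h : i = j <;>
    simp [h, Matrix.charmatrix_apply_eq, Matrix.charmatrix_apply_ne, Matrix.one_apply,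
      Matrix.smul_apply, Matrix.sub_apply]

lemma mem_spectrum_iff_det {n : ℕ} (A : Matrix (Fin n) (Fin n) ℂ) (z : ℂ) :
    z ∈ spectrum ℂ A ↔ (z • (1 : Matrix (Fin n) (Fin n) ℂ) - A).det = 0 := by
  rw [spectrum.mem_iff, Matrix.isUnit_iff_isUnit_det, isUnit_iff_ne_zero, not_not,
    Algebra.algebraMap_eq_smul_one]

lemma det_arrowhead {m : ℕ} (a w : Fin m → ℂ) (z : ℂ)
    (M : Matrix (Fin (m+1)) (Fin (m+1)) ℂ)
    (h00 : M 0 0 = z - ∑ k, w k)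
    (h0j : ∀ j : Fin m, M 0 j.succ = w j)
    (hj0 : ∀ j : Fin m, M j.succ 0 = a j)
    (hjj : ∀ j : Fin m, M j.succ j.succ = z - a j)
    (hji : ∀ i j : Fin m, i ≠ j → M j.succ i.succ = 0)
    (hz : ∀ j, z ≠ a j) :
    M.det = z * (hPoly ℂ a w).eval z := by
  have hza : ∀ j, z - a j ≠ 0 := fun j => sub_ne_zero.2 (hz j)
  set t : Fin (m+1) → ℂ := Fin.cases 1 (fun j => -(a j)/(z - a j)) with ht
  set T : Matrix (Fin (m+1)) (Fin (m+1)) ℂ :=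
    fun i k => if k = 0 then t i else if i = k then 1 else 0 with hT
  have hT0 : ∀ l, T l 0 = t l := fun l => by simp [hT]
  have hTk : ∀ (l : Fin (m+1)) (k : Fin m), T l k.succ = if l = k.succ then 1 else 0 := by
    intro l k
    show (if k.succ = 0 then t l else if l = k.succ then (1:ℂ) else 0) = _
    rw [if_neg (Fin.succ_ne_zero k)]
  have hdetT : T.det = 1 := by
    rw [Matrix.det_of_lowerTriangular T ?_]
    · have hdiag : ∀ i : Fin (m+1), T i i = 1 := by
        intro i
        rcases Fin.eq_zero_or_eq_succ i with h | ⟨j, rfl⟩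
        · subst h; simp [hT, ht]
        · rw [hTk]; simp
      exact Finset.prod_eq_one fun i _ => hdiag i
    · intro i k hik
      have h1 : i < k := hik
      have hk0 : k ≠ 0 := by rintro rfl; exact Fin.not_lt_zero i h1
      show (if k = 0 then t i else if i = k then 1 else 0) = 0
      rw [if_neg hk0, if_neg (ne_of_lt h1)]
  have hmul : ∀ (i : Fin (m+1)) (k : Fin m), (M * T) i k.succ = M i k.succ := by
    intro i k
    simp only [Matrix.mul_apply, hTk, mul_ite, mul_one, mul_zero]
    simp
  have hMTcol : ∀ j : Fin m, (M * T) j.succ 0 = 0 := by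
    intro j
    simp only [Matrix.mul_apply, hT0]
    rw [Fin.sum_univ_succ]
    rw [Finset.sum_eq_single j]
    · simp only [ht, Fin.cases_zero, Fin.cases_succ, hj0, hjj, mul_one]
      have hh : (z - a j) * (-(a j) / (z - a j)) = -a j := by
        rw [mul_div_assoc']
        exact mul_div_cancel_left₀ _ (hza j)
      rw [hh]
      ring
    · intro k _ hkj
      simp [ht, hji k j hkj]
    · simp
  have hMT00 : (M * T) 0 0 = z * (1 - ∑ j, w j / (z - a j)) := by
    simp only [Matrix.mul_apply, hT0]
    rw [Fin.sum_univ_succ]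
    simp only [ht, Fin.cases_zero, Fin.cases_succ, mul_one, h00, h0j]
    rw [mul_sub, mul_one, Finset.mul_sum, sub_add, ← Finset.sum_sub_distrib]
    congr 1
    refine Finset.sum_congr rfl fun j _ => ?_
    have h' := hza j
    field_simp
    ring
  have hdetMT : (M * T).det = z * (hPoly ℂ a w).eval z := by
    rw [Matrix.det_of_upperTriangular ?_]
    · rw [Fin.prod_univ_succ, hMT00]
      rw [Finset.prod_congr rfl fun (j : Fin m) _ => (hmul j.succ j).trans (hjj j),
        hPoly_eval_ne a w z hz]
      ring
    · intro i k hik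
      simp only [id] at hik
      rcases Fin.eq_zero_or_eq_succ i with h | ⟨j, rfl⟩
      · subst h; exact absurd hik (Fin.not_lt_zero k)
      · rcases Fin.eq_zero_or_eq_succ k with h | ⟨i', rfl⟩
        · subst h; exact hMTcol j
        · have hij : i' ≠ j := by
            intro h
            subst h
            exact lt_irrefl _ hik
          exact (hmul j.succ i').trans (hji i' j hij)
  have hd := Matrix.det_mul M T
  rw [hdetT, mul_one] at hd
  rw [← hd, hdetMT]

lemma prod_sub_comm {ι : Type*} (s : Finset ι) (f g : ι → ℝ) :
    ∏ x ∈ s, (f x - g x) = (-1 : ℝ)^s.card * ∏ x ∈ s, (g x - f x) := by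
  rw [← Finset.prod_const, ← Finset.prod_mul_distrib]
  exact Finset.prod_congr rfl fun x _ => by ring

section Real
variable {m : ℕ} (hm : 1 ≤ m) (α w : Fin m → ℝ)
  (hα : StrictMono α) (hαpos : ∀ j, 0 < α j) (hw : ∀ j, 0 < w j)

lemma hPoly_eval_alpha (j : Fin m) :
    (hPoly ℝ α w).eval (α j) = -(w j * ∏ k ∈ Finset.univ.erase j, (α j - α k)) := by
  rw [hPoly_eval]
  rw [Finset.prod_eq_zero (Finset.mem_univ j) (by ring)]
  rw [Finset.sum_eq_single j]
  · ring
  · intro i _ hij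
    rw [Finset.prod_eq_zero (Finset.mem_erase.2 ⟨hij.symm, Finset.mem_univ j⟩) (by ring)]
    ring
  · simp

include hα hw in
lemma hPoly_alpha_sign (j : Fin m) :
    0 < (-1 : ℝ)^(j.val + m) * (hPoly ℝ α w).eval (α j) := by
  have hsplit : Finset.univ.erase j = Finset.Iio j ∪ Finset.Ioi j := by
    ext k
    simp only [Finset.mem_erase, Finset.mem_univ, and_true, Finset.mem_union,
      Finset.mem_Iio, Finset.mem_Ioi]
    exact ne_iff_lt_or_gt
  have hdisj : Disjoint (Finset.Iio j) (Finset.Ioi j) := by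
    rw [Finset.disjoint_left]
    intro k hk1 hk2
    simp only [Finset.mem_Iio] at hk1
    simp only [Finset.mem_Ioi] at hk2
    exact absurd (hk1.trans hk2) (lt_irrefl _)
  have hP1 : 0 < ∏ k ∈ Finset.Iio j, (α j - α k) :=
    Finset.prod_pos fun k hk => sub_pos.2 (hα (Finset.mem_Iio.1 hk))
  have hP2 : 0 < ∏ k ∈ Finset.Ioi j, (α k - α j) :=
    Finset.prod_pos fun k hk => sub_pos.2 (hα (Finset.mem_Ioi.1 hk))
  have hcard : (Finset.Ioi j).card = m - 1 - j.val := Fin.card_Ioi j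
  rw [hPoly_eval_alpha, hsplit, Finset.prod_union hdisj,
    prod_sub_comm (Finset.Ioi j) (fun k => α j) (fun k => α k), hcard]
  have hkey : (-1:ℝ)^(j.val + m) * -(1 : ℝ) * (-1)^(m - 1 - j.val) = 1 := by
    have h2 : (-1:ℝ)^(j.val + m) * -(1:ℝ) * (-1)^(m - 1 - j.val)
        = (-1)^(j.val + m + 1 + (m - 1 - j.val)) := by
      rw [pow_add (-1:ℝ) (j.val + m + 1) (m - 1 - j.val), pow_succ]
    rw [h2]
    exact Even.neg_one_pow (Nat.even_iff.2 (by have := j.isLt; omega))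
  calc (0:ℝ) < ((-1:ℝ)^(j.val + m) * -(1:ℝ) * (-1)^(m - 1 - j.val)) *
        (w j * ((∏ k ∈ Finset.Iio j, (α j - α k)) * ∏ k ∈ Finset.Ioi j, (α k - α j))) := by
        rw [hkey, one_mul]
        exact mul_pos (hw j) (mul_pos hP1 hP2)
    _ = (-1:ℝ)^(j.val + m) *
        -(w j * ((∏ k ∈ Finset.Iio j, (α j - α k)) *
          ((-1)^(m - 1 - j.val) * ∏ k ∈ Finset.Ioi j, (α k - α j)))) := by ring

include hm hαpos hw in
lemma hPoly_eval_nonpos (lam : ℝ) (hlam : lam ≤ 0) :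
    0 < (-1:ℝ)^m * (hPoly ℝ α w).eval lam := by
  have hsub : ∀ j, 0 < α j - lam := fun j => by linarith [hαpos j]
  have hprod1 : ∏ j, (lam - α j) = (-1:ℝ)^m * ∏ j, (α j - lam) := by
    rw [prod_sub_comm]
    simp
  have hprod2 : ∀ j : Fin m, ∏ k ∈ Finset.univ.erase j, (lam - α k)
      = (-1:ℝ)^(m-1) * ∏ k ∈ Finset.univ.erase j, (α k - lam) := by
    intro j
    rw [prod_sub_comm]
    rw [Finset.card_erase_of_mem (Finset.mem_univ _)]
    simp
  have e1 : (-1:ℝ)^m * (-1)^m = 1 := by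
    rw [← pow_add]; exact Even.neg_one_pow ⟨m, rfl⟩
  have e2 : (-1:ℝ)^m * (-1)^(m - 1) = -1 := by
    rw [← pow_add]
    exact Odd.neg_one_pow ⟨m - 1, by omega⟩
  have key : (-1:ℝ)^m * (hPoly ℝ α w).eval lam
      = ∏ j, (α j - lam) + ∑ j, w j * ∏ k ∈ Finset.univ.erase j, (α k - lam) := by
    rw [hPoly_eval, mul_sub, hprod1, ← mul_assoc, e1, one_mul, Finset.mul_sum]
    have hterm : ∀ j ∈ Finset.univ, (-1:ℝ)^m * (w j * ∏ k ∈ Finset.univ.erase j, (lam - α k))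
        = -(w j * ∏ k ∈ Finset.univ.erase j, (α k - lam)) := by
      intro j _
      rw [hprod2 j]
      calc (-1:ℝ)^m * (w j * ((-1)^(m-1) * ∏ k ∈ Finset.univ.erase j, (α k - lam)))
          = ((-1:ℝ)^m * (-1)^(m-1)) * (w j * ∏ k ∈ Finset.univ.erase j, (α k - lam)) := by ring
        _ = -(w j * ∏ k ∈ Finset.univ.erase j, (α k - lam)) := by rw [e2]; ring
    rw [Finset.sum_congr rfl hterm, Finset.sum_neg_distrib, sub_neg_eq_add]
  rw [key]
  have h1 : 0 < ∏ j, (α j - lam) := Finset.prod_pos fun j _ => hsub j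
  have h2 : 0 ≤ ∑ j, w j * ∏ k ∈ Finset.univ.erase j, (α k - lam) :=
    Finset.sum_nonneg fun j _ => le_of_lt (mul_pos (hw j)
      (Finset.prod_pos fun k _ => hsub k))
  linarith

include hm hw in
lemma hPoly_eval_big (B : ℝ) (hB : ∀ j, α j + (∑ k, w k) + 1 ≤ B) :
    0 < (hPoly ℝ α w).eval B := by
  set S := ∑ k, w k with hS
  have hSpos : 0 ≤ S := Finset.sum_nonneg fun k _ => le_of_lt (hw k)
  have hsub : ∀ j, S + 1 ≤ B - α j := fun j => by linarith [hB j]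
  have hsubpos : ∀ j, 0 < B - α j := fun j => lt_of_lt_of_le (by linarith) (hsub j)
  have hPpos : 0 < ∏ k, (B - α k) := Finset.prod_pos fun k _ => hsubpos k
  have h1 : ∀ j ∈ Finset.univ, (S + 1) * (w j * ∏ k ∈ Finset.univ.erase j, (B - α k))
      ≤ w j * ∏ k, (B - α k) := by
    intro j _
    rw [← Finset.mul_prod_erase _ _ (Finset.mem_univ j)]
    have hQ : 0 < ∏ k ∈ Finset.univ.erase j, (B - α k) :=
      Finset.prod_pos fun k _ => hsubpos k
    have h3 : (S+1) * ∏ k ∈ Finset.univ.erase j, (B - α k)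
        ≤ (B - α j) * ∏ k ∈ Finset.univ.erase j, (B - α k) :=
      mul_le_mul_of_nonneg_right (hsub j) hQ.le
    calc (S+1) * (w j * ∏ k ∈ Finset.univ.erase j, (B - α k))
        = w j * ((S+1) * ∏ k ∈ Finset.univ.erase j, (B - α k)) := by ring
      _ ≤ w j * ((B - α j) * ∏ k ∈ Finset.univ.erase j, (B - α k)) :=
          mul_le_mul_of_nonneg_left h3 (hw j).le
  have h2 : (S + 1) * (∑ j, w j * ∏ k ∈ Finset.univ.erase j, (B - α k))
      ≤ S * ∏ k, (B - α k) := by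
    rw [Finset.mul_sum, hS, Finset.sum_mul]
    exact Finset.sum_le_sum h1
  rw [hPoly_eval]
  nlinarith

include hm hα hαpos hw in
lemma hPoly_real_roots :
    ∃ R : Finset ℝ,
      R.card = m ∧
      (∀ x : ℝ, (hPoly ℝ α w).eval x = 0 ↔ x ∈ R) ∧
      (0 : ℝ) ∉ R ∧
      (∀ x ∈ R, ∀ j, x ≠ α j) ∧
      (hPoly ℝ α w).Splits := by
  classical
  set h := hPoly ℝ α w with hdef
  have hmonic : h.Monic := hPoly_monic hm ℝ α w
  have hne : h ≠ 0 := hmonic.ne_zero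
  have hdeg : h.natDegree = m := hPoly_natDegree hm ℝ α w
  -- the top point
  set S := ∑ k, w k with hS
  have hSpos : 0 ≤ S := Finset.sum_nonneg fun k _ => le_of_lt (hw k)
  set jmax : Fin m := ⟨m - 1, by omega⟩ with hjmax
  set B := α jmax + S + 1 with hBdef
  have hjle : ∀ j : Fin m, α j ≤ α jmax := by
    intro j
    exact hα.monotone (by simp [hjmax, Fin.le_def]; omega)
  have hBbig : ∀ j, α j + S + 1 ≤ B := fun j => by
    have := hjle j; rw [hBdef]; linarith
  have hBgt : ∀ j, α j < B := fun j => by have := hBbig j; linarith [hw j]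
  have hBval : 0 < h.eval B := hPoly_eval_big hm α w hw B hBbig
  -- the interpolation points
  set β : Fin (m+1) → ℝ := fun i => if hi : i.val < m then α ⟨i.val, hi⟩ else B with hβ
  have hβmono : StrictMono β := by
    intro i k hik
    simp only [hβ]
    rcases lt_or_ge k.val m with hkm | hkm
    · have him : i.val < m := lt_trans hik hkm
      rw [dif_pos him, dif_pos hkm]
      exact hα hik
    · have hkm' : ¬ k.val < m := not_lt.2 hkm
      have him : i.val < m := by omega
      rw [dif_pos him, dif_neg hkm']
      exact hBgt _
  have hSB : ∀ i : Fin (m+1), 0 < (-1:ℝ)^(i.val + m) * h.eval (β i) := by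
    intro i
    rcases lt_or_ge i.val m with him | him
    · have : β i = α ⟨i.val, him⟩ := by simp only [hβ]; rw [dif_pos him]
      rw [this]
      exact hPoly_alpha_sign α w hα hw ⟨i.val, him⟩
    · have him' : i.val = m := by omega
      have : β i = B := by simp only [hβ]; rw [dif_neg (by omega)]
      rw [this, him']
      rw [show ((-1:ℝ))^(m + m) = 1 from Even.neg_one_pow ⟨m, rfl⟩, one_mul]
      exact hBval
  -- roots by IVT
  have hr : ∀ i : Fin m, ∃ x, x ∈ Set.Ioo (β i.castSucc) (β i.succ) ∧ h.eval x = 0 := by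
    intro i
    set f : ℝ → ℝ := fun x => (-1:ℝ)^(i.val + m) * h.eval x with hf
    have hcont : ContinuousOn f (Set.Icc (β i.castSucc) (β i.succ)) :=
      (continuous_const.mul h.continuous).continuousOn
    have hab : β i.castSucc ≤ β i.succ :=
      le_of_lt (hβmono (by simp [Fin.lt_def]))
    have hfa : 0 < f (β i.castSucc) := by
      have := hSB i.castSucc
      simpa [hf] using this
    have hfb : f (β i.succ) < 0 := by
      have h1 := hSB i.succ
      have h2 : ((i.succ : Fin (m+1)).val + m) = (i.val + m) + 1 := by
        simp [Fin.val_succ]; omega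
      rw [h2, pow_succ] at h1
      have h3 : f (β i.succ) = (-1:ℝ)^(i.val + m) * h.eval (β i.succ) := rfl
      rw [h3]
      nlinarith
    have := intermediate_value_Ioo' hab hcont
    have h0 : (0:ℝ) ∈ Set.Ioo (f (β i.succ)) (f (β i.castSucc)) := ⟨hfb, hfa⟩
    obtain ⟨x, hx, hfx⟩ := this h0
    refine ⟨x, hx, ?_⟩
    have : (-1:ℝ)^(i.val + m) ≠ 0 := by positivity
    rw [hf] at hfx
    simp only at hfx
    exact (mul_eq_zero.1 hfx).resolve_left this
  choose r hr1 hr2 using hr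
  have hrmono : StrictMono r := by
    intro i k hik
    calc r i < β i.succ := (hr1 i).2
      _ ≤ β k.castSucc := hβmono.monotone (by simp [Fin.le_def]; omega)
      _ < r k := (hr1 k).1
  set R0 : Finset ℝ := Finset.univ.image r with hR0
  have hR0card : R0.card = m := by
    rw [hR0, Finset.card_image_of_injective _ hrmono.injective, Finset.card_univ,
      Fintype.card_fin]
  set R : Finset ℝ := h.roots.toFinset with hR
  have hsubR : R0 ⊆ R := by
    intro x hx
    rw [hR0] at hx
    obtain ⟨i, _, rfl⟩ := Finset.mem_image.1 hx
    rw [hR, Multiset.mem_toFinset, Polynomial.mem_roots hne]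
    exact hr2 i
  have hcards : Multiset.card h.roots ≤ m := by
    have := Polynomial.card_roots' h
    omega
  have hRcard_le : R.card ≤ m := le_trans (Multiset.toFinset_card_le _) hcards
  have hReq : R0 = R := Finset.eq_of_subset_of_card_le hsubR (by omega)
  have hRcard : R.card = m := by rw [← hReq]; exact hR0card
  have hrootscard : Multiset.card h.roots = m := by
    have h1 : R.card ≤ Multiset.card h.roots := Multiset.toFinset_card_le _
    omega
  have hsplits : h.Splits := by
    rw [Polynomial.splits_iff_card_roots, hrootscard, hdeg]
  have hmem : ∀ x : ℝ, h.eval x = 0 ↔ x ∈ R := by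
    intro x
    rw [hR, Multiset.mem_toFinset, Polynomial.mem_roots hne, Polynomial.IsRoot.def]
  refine ⟨R, hRcard, hmem, ?_, ?_, hsplits⟩
  · intro h0
    have := (hmem 0).2 h0
    have hpos := hPoly_eval_nonpos hm α w hαpos hw 0 (le_refl 0)
    rw [this] at hpos
    simp at hpos
  · intro x hx j hxj
    have hx0 := (hmem x).2 hx
    have := hPoly_alpha_sign α w hα hw j
    rw [← hxj, hx0] at this
    simp at this

end Real

lemma charpoly_arrowhead {m : ℕ} (a w : Fin m → ℂ) (A : Matrix (Fin (m+1)) (Fin (m+1)) ℂ)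
    (hA00 : A 0 0 = ∑ k, w k)
    (hA0j : ∀ j : Fin m, A 0 j.succ = -(w j))
    (hAj0 : ∀ j : Fin m, A j.succ 0 = -(a j))
    (hAjj : ∀ j : Fin m, A j.succ j.succ = a j)
    (hAji : ∀ i j : Fin m, i ≠ j → A j.succ i.succ = 0) :
    A.charpoly = X * hPoly ℂ a w := by
  apply Polynomial.eq_of_infinite_eval_eq
  apply Set.Infinite.mono ?_ ((Set.finite_range a).infinite_compl)
  intro z hz
  have hz' : ∀ j, z ≠ a j := fun j hj => hz ⟨j, hj.symm⟩
  have hne01 : ∀ j : Fin m, (0 : Fin (m+1)) ≠ j.succ := fun j => (Fin.succ_ne_zero j).symm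
  simp only [Set.mem_setOf_eq]
  rw [eval_charpoly']
  rw [det_arrowhead a w z (z • 1 - A) ?_ ?_ ?_ ?_ ?_ hz', eval_mul, eval_X]
  · rw [Matrix.sub_apply, Matrix.smul_apply, Matrix.one_apply_eq, hA00, smul_eq_mul, mul_one]
  · intro j
    rw [Matrix.sub_apply, Matrix.smul_apply, Matrix.one_apply_ne (hne01 j), hA0j, smul_eq_mul,
      mul_zero, zero_sub, neg_neg]
  · intro j
    rw [Matrix.sub_apply, Matrix.smul_apply, Matrix.one_apply_ne (Fin.succ_ne_zero j), hAj0,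
      smul_eq_mul, mul_zero, zero_sub, neg_neg]
  · intro j
    rw [Matrix.sub_apply, Matrix.smul_apply, Matrix.one_apply_eq, hAjj, smul_eq_mul, mul_one]
  · intro i j hij
    have : (j.succ : Fin (m+1)) ≠ i.succ := fun hh => hij (Fin.succ_injective _ hh).symm
    rw [Matrix.sub_apply, Matrix.smul_apply, Matrix.one_apply_ne this, hAji i j hij,
      smul_eq_mul, mul_zero, zero_sub, neg_zero]

theorem matrix_AN_eigenvalues
    (m : ℕ) (hm : 1 ≤ m) (α : Fin m → ℝ) (b : Fin (m + 1) → ℝ) (c : Fin m → ℝ)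
    (hαpos : ∀ j, 0 < α j) (hαmono : StrictMono α) (hbpos : ∀ j, 0 < b j)
    (hc : ∀ j, c j = b j.succ / b 0)
    (A : Matrix (Fin (m + 1)) (Fin (m + 1)) ℂ)
    (hA00 : A 0 0 = ∑ k : Fin m, (α k : ℂ) * (b k.succ : ℂ) * (b 0 : ℂ)⁻¹)
    (hA0j : ∀ j : Fin m, A 0 j.succ = -((α j : ℂ) * (b j.succ : ℂ) * (b 0 : ℂ)⁻¹))
    (hAj0 : ∀ j : Fin m, A j.succ 0 = -(α j : ℂ))
    (hAjj : ∀ j : Fin m, A j.succ j.succ = (α j : ℂ))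
    (hAji : ∀ i j : Fin m, i ≠ j → A j.succ i.succ = 0) :
    (spectrum ℂ A).ncard = m + 1 ∧
    spectrum ℂ A = (fun x : ℝ => (x : ℂ)) ''
      ({0} ∪ {lam : ℝ | (∀ j, lam ≠ α j) ∧ 1 + ∑ i, c i * α i / (α i - lam) = 0}) := by
  classical
  set w : Fin m → ℝ := fun j => c j * α j with hw
  have hwpos : ∀ j, 0 < w j := by
    intro j
    exact mul_pos (by rw [hc j]; exact div_pos (hbpos _) (hbpos 0)) (hαpos j)
  have hwcast : ∀ j : Fin m, ((w j : ℝ) : ℂ) = (α j : ℂ) * (b j.succ : ℂ) * (b 0 : ℂ)⁻¹ := by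
    intro j
    rw [hw]
    simp only [hc j]
    push_cast
    have hb0 : (b 0 : ℂ) ≠ 0 := by
      simpa using ne_of_gt (hbpos 0)
    field_simp
  -- the charpoly identity
  have hcp : A.charpoly = X * ((hPoly ℝ α w).map (algebraMap ℝ ℂ)) := by
    rw [hPoly_map]
    apply charpoly_arrowhead (fun j => (α j : ℂ)) (fun j => (w j : ℂ)) A
    · rw [hA00]
      exact (Finset.sum_congr rfl fun k _ => (hwcast k)).symm
    · intro j; rw [hA0j j, hwcast j]
    · intro j; exact hAj0 j
    · intro j; exact hAjj j
    · exact hAji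
  obtain ⟨R, hRcard, hRmem, hR0, hRalpha, hsplits⟩ :=
    hPoly_real_roots hm α w hαmono hαpos hwpos
  have hmonic := hPoly_monic hm ℝ α w
  have hne : hPoly ℝ α w ≠ 0 := hmonic.ne_zero
  have hCne : (hPoly ℝ α w).map (algebraMap ℝ ℂ) ≠ 0 :=
    (Polynomial.map_ne_zero_iff (algebraMap ℝ ℂ).injective).2 hne
  -- complex roots description
  have hcroots : ∀ z : ℂ, ((hPoly ℝ α w).map (algebraMap ℝ ℂ)).eval z = 0 ↔
      ∃ x : ℝ, x ∈ R ∧ (x : ℂ) = z := by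
    intro z
    rw [show (((hPoly ℝ α w).map (algebraMap ℝ ℂ)).eval z = 0) ↔
        z ∈ ((hPoly ℝ α w).map (algebraMap ℝ ℂ)).roots from
      by rw [Polynomial.mem_roots hCne, Polynomial.IsRoot.def]]
    rw [hsplits.roots_map, Multiset.mem_map]
    constructor
    · rintro ⟨x, hx, rfl⟩
      exact ⟨x, (hRmem x).1 (by rwa [Polynomial.mem_roots hne, Polynomial.IsRoot.def] at hx), rfl⟩
    · rintro ⟨x, hx, rfl⟩
      exact ⟨x, by rw [Polynomial.mem_roots hne, Polynomial.IsRoot.def]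
                   exact (hRmem x).2 hx, rfl⟩
  -- spectrum characterization
  have hspec : ∀ z : ℂ, z ∈ spectrum ℂ A ↔ (z = 0 ∨ ∃ x : ℝ, x ∈ R ∧ (x : ℂ) = z) := by
    intro z
    rw [mem_spectrum_iff_det, ← eval_charpoly', hcp, eval_mul, eval_X, mul_eq_zero, hcroots]
  -- the F-condition set equals ↑R
  have hFset : {lam : ℝ | (∀ j, lam ≠ α j) ∧ 1 + ∑ i, c i * α i / (α i - lam) = 0} =
      (R : Set ℝ) := by
    ext lam
    simp only [Set.mem_setOf_eq, Finset.mem_coe]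
    constructor
    · rintro ⟨hne', hF⟩
      apply (hRmem lam).1
      rw [hPoly_eval_ne α w lam (fun j h => hne' j h)]
      have : (1 : ℝ) - ∑ j, w j / (lam - α j) = 1 + ∑ i, c i * α i / (α i - lam) := by
        rw [sub_eq_add_neg, ← Finset.sum_neg_distrib]
        congr 1
        refine Finset.sum_congr rfl fun j _ => ?_
        rw [hw, ← div_neg, neg_sub]
      rw [this, hF, mul_zero]
    · intro hlam
      have heval := (hRmem lam).2 hlam
      have hnea : ∀ j, lam ≠ α j := hRalpha lam hlam
      refine ⟨hnea, ?_⟩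
      rw [hPoly_eval_ne α w lam hnea] at heval
      have hprodne : (∏ j, (lam - α j)) ≠ 0 :=
        Finset.prod_ne_zero_iff.2 fun j _ => sub_ne_zero.2 (hnea j)
      have h2 := (mul_eq_zero.1 heval).resolve_left hprodne
      have : (1 : ℝ) - ∑ j, w j / (lam - α j) = 1 + ∑ i, c i * α i / (α i - lam) := by
        rw [sub_eq_add_neg, ← Finset.sum_neg_distrib]
        congr 1
        refine Finset.sum_congr rfl fun j _ => ?_
        rw [hw, ← div_neg, neg_sub]
      rw [this] at h2
      exact h2
  -- spectrum as image
  have hspec2 : spectrum ℂ A = (fun x : ℝ => (x : ℂ)) '' (({0} : Set ℝ) ∪ (R : Set ℝ)) := by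
    ext z
    rw [hspec z]
    constructor
    · rintro (rfl | ⟨x, hx, rfl⟩)
      · exact ⟨0, Or.inl rfl, by simp⟩
      · exact ⟨x, Or.inr hx, rfl⟩
    · rintro ⟨x, hx | hx, rfl⟩
      · left; rw [Set.mem_singleton_iff] at hx; rw [hx]; simp
      · right; exact ⟨x, hx, rfl⟩
  constructor
  · rw [hspec2]
    rw [Set.ncard_image_of_injective _ (fun x y hxy => by exact_mod_cast hxy)]
    have : (({0} : Set ℝ) ∪ (R : Set ℝ)) = ((insert (0:ℝ) R : Finset ℝ) : Set ℝ) := by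
      rw [Finset.coe_insert, Set.insert_eq]
    rw [this, Set.ncard_coe_finset, Finset.card_insert_of_notMem hR0, hRcard]
  · rw [hspec2, hFset]
end

section
/- Let m ≥ 1 and let α̃_1, ..., α̃_m, β̃_1, ..., β̃_m be positive real numbers satisfying the interlacing conditions α̃_j < β̃_j < α̃_{j+1} for j ∈ {1, ..., m−1} and α̃_m < β̃_m < ∞. Then the linear system of m equations in the unknowns ρ_1, ..., ρ_m ∈ ℝ given by 1 + Σ_{j=1}^m ρ_j · α̃_j/(α̃_j − β̃_k) = 0 for k = 1, ..., m has a unique solution, and this solution is given explicitly by ρ_j = ((β̃_j − α̃_j)/α̃_j) · Π_{i ∈ {1,...,m}, i ≠ j} ((β̃_i − α̃_j)/(α̃_i − α̃_j)) for j ∈ {1, ..., m}. -/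
open Polynomial Finset

/-- The nodal sum polynomial `∑ j, c j * ∏_{i ≠ j} (X - a i)`. -/
noncomputable def nodalSum {m : ℕ} (a c : Fin m → ℝ) : ℝ[X] :=
  ∑ j, Polynomial.C (c j) * ∏ i ∈ Finset.univ.erase j, (Polynomial.X - Polynomial.C (a i))

lemma nodalSum_eval {m : ℕ} (a c : Fin m → ℝ) (x : ℝ) :
    (nodalSum a c).eval x = ∑ j, c j * ∏ i ∈ Finset.univ.erase j, (x - a i) := by
  simp [nodalSum, eval_finset_sum, eval_prod]

lemma nodalSum_eval_node {m : ℕ} {a : Fin m → ℝ} (ha : Function.Injective a)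
    (c : Fin m → ℝ) (j : Fin m) :
    (nodalSum a c).eval (a j) = c j * ∏ i ∈ Finset.univ.erase j, (a j - a i) := by
  rw [nodalSum_eval]
  refine Finset.sum_eq_single j (fun j' _ hj' => ?_) (by simp)
  have hjmem : j ∈ Finset.univ.erase j' :=
    Finset.mem_erase.mpr ⟨fun h => hj' h.symm, Finset.mem_univ j⟩
  rw [Finset.prod_eq_zero hjmem (by ring), mul_zero]

lemma nodalSum_natDegree_lt {m : ℕ} (hm : 1 ≤ m) (a c : Fin m → ℝ) :
    (nodalSum a c).natDegree < m := by
  have h : (nodalSum a c).natDegree ≤ m - 1 := by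
    refine Polynomial.natDegree_sum_le_of_forall_le _ _ (fun j _ => ?_)
    calc (Polynomial.C (c j) * ∏ i ∈ Finset.univ.erase j,
            (Polynomial.X - Polynomial.C (a i))).natDegree
        ≤ (Polynomial.C (c j)).natDegree + (∏ i ∈ Finset.univ.erase j,
            (Polynomial.X - Polynomial.C (a i))).natDegree := natDegree_mul_le
      _ ≤ 0 + ∑ i ∈ Finset.univ.erase j, (Polynomial.X - Polynomial.C (a i)).natDegree := by
          gcongr
          · exact le_of_eq (natDegree_C _)
          · exact Polynomial.natDegree_prod_le _ _
      _ ≤ m - 1 := by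
          simp only [natDegree_X_sub_C, zero_add, Finset.sum_const, smul_eq_mul, mul_one]
          simp [Finset.card_erase_of_mem]
  omega

/-- If a nodal sum over nodes `a` vanishes at `m` distinct points `b`, then each
coefficient combination vanishes. -/
lemma nodal_vanish {m : ℕ} (hm : 1 ≤ m) {a b : Fin m → ℝ}
    (ha : Function.Injective a) (hb : Function.Injective b) (c : Fin m → ℝ)
    (h : ∀ k, ∑ j, c j * ∏ i ∈ Finset.univ.erase j, (b k - a i) = 0) (j : Fin m) :
    c j * ∏ i ∈ Finset.univ.erase j, (a j - a i) = 0 := by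
  have hzero : nodalSum a c = 0 := by
    refine Polynomial.eq_zero_of_natDegree_lt_card_of_eval_eq_zero _ hb
      (fun k => ?_) (by simpa using nodalSum_natDegree_lt hm a c)
    rw [nodalSum_eval]; exact h k
  have := nodalSum_eval_node ha c j
  rw [hzero] at this
  simpa using this.symm

/-- Lagrange interpolation identity for `∏(x - a i) - ∏(x - b i)`. -/
lemma nodal_interp {m : ℕ} (hm : 1 ≤ m) {a : Fin m → ℝ} (b : Fin m → ℝ)
    (ha : Function.Injective a) (c : Fin m → ℝ)
    (h : ∀ j, c j * ∏ i ∈ Finset.univ.erase j, (a j - a i)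
        = (∏ i, (a j - a i)) - ∏ i, (a j - b i)) (x : ℝ) :
    ∑ j, c j * ∏ i ∈ Finset.univ.erase j, (x - a i)
      = (∏ i, (x - a i)) - ∏ i, (x - b i) := by
  set A : ℝ[X] := ∏ i, (Polynomial.X - Polynomial.C (a i)) with hA
  set B : ℝ[X] := ∏ i, (Polynomial.X - Polynomial.C (b i)) with hB
  have hAm : A.Monic := monic_prod_of_monic _ _ (fun i _ => monic_X_sub_C _)
  have hBm : B.Monic := monic_prod_of_monic _ _ (fun i _ => monic_X_sub_C _)
  have hAd : A.natDegree = m := by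
    rw [hA, Polynomial.natDegree_prod_of_monic _ _ (fun i _ => monic_X_sub_C _)]
    simp
  have hBd : B.natDegree = m := by
    rw [hB, Polynomial.natDegree_prod_of_monic _ _ (fun i _ => monic_X_sub_C _)]
    simp
  have hPdeg : (A - B).natDegree < m := by
    rcases eq_or_ne (A - B) 0 with h0 | h0
    · rw [h0]; simp; omega
    · rw [Polynomial.natDegree_lt_iff_degree_lt h0]
      have hdAB : A.degree = B.degree := by
        rw [Polynomial.degree_eq_natDegree hAm.ne_zero,
          Polynomial.degree_eq_natDegree hBm.ne_zero, hAd, hBd]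
      have hlc : A.leadingCoeff = B.leadingCoeff := by
        rw [hAm.leadingCoeff, hBm.leadingCoeff]
      have := Polynomial.degree_sub_lt hdAB hAm.ne_zero hlc
      rwa [Polynomial.degree_eq_natDegree hAm.ne_zero, hAd] at this
  have hN : nodalSum a c = A - B := by
    have hd : (nodalSum a c - (A - B)).natDegree < m := by
      have := Polynomial.natDegree_sub_le (nodalSum a c) (A - B)
      have h2 := nodalSum_natDegree_lt hm a c
      omega
    have hkey : nodalSum a c - (A - B) = 0 := by
      refine Polynomial.eq_zero_of_natDegree_lt_card_of_eval_eq_zero _ ha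
        (fun j => ?_) (by simpa using hd)
      rw [eval_sub, eval_sub, nodalSum_eval_node ha c j, hA, hB, eval_prod, eval_prod]
      simp only [eval_sub, eval_X, eval_C]
      rw [h j]; ring
    exact sub_eq_zero.mp hkey
  have := congrArg (Polynomial.eval x) hN
  rw [nodalSum_eval, eval_sub, hA, hB, eval_prod, eval_prod] at this
  simpa using this

theorem linear_system_unique_solution
    (m : ℕ) (hm : 1 ≤ m) (α β : Fin m → ℝ)
    (hαpos : ∀ j, 0 < α j) (hβpos : ∀ j, 0 < β j)
    (hαβ : ∀ j, α j < β j)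
    (hβα : ∀ (j : Fin m) (hj : (j : ℕ) + 1 < m), β j < α ⟨(j : ℕ) + 1, hj⟩)
    (ρ : Fin m → ℝ)
    (hρ : ∀ j, ρ j = (β j - α j) / α j *
      ∏ i ∈ Finset.univ.erase j, (β i - α j) / (α i - α j)) :
    (∀ k, 1 + ∑ j, ρ j * α j / (α j - β k) = 0) ∧
    ∀ ρ' : Fin m → ℝ, (∀ k, 1 + ∑ j, ρ' j * α j / (α j - β k) = 0) → ρ' = ρ := by
  -- ordering facts
  obtain ⟨n, rfl⟩ : ∃ n, m = n + 1 := ⟨m - 1, by omega⟩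
  have hαmono : StrictMono α := by
    rw [Fin.strictMono_iff_lt_succ]
    intro i
    have h1 : (i.castSucc : ℕ) + 1 < n + 1 := by simp [i.isLt]
    have := hβα i.castSucc h1
    have h2 : (⟨(i.castSucc : ℕ) + 1, h1⟩ : Fin (n+1)) = i.succ := by
      ext; simp
    rw [h2] at this
    exact lt_trans (hαβ i.castSucc) this
  have hβltα : ∀ k i : Fin (n+1), k < i → β k < α i := by
    intro k i hki
    have hki' : (k : ℕ) < (i : ℕ) := hki
    have hi := i.isLt
    have h1 : (k : ℕ) + 1 < n + 1 := by omega
    have h2 := hβα k h1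
    have hle : (⟨(k:ℕ)+1, h1⟩ : Fin (n+1)) ≤ i := by
      rw [Fin.le_def]; simpa using hki'
    rcases eq_or_lt_of_le hle with heq | hlt
    · rwa [heq] at h2
    · exact lt_trans h2 (hαmono hlt)
  have hαltβ : ∀ i k : Fin (n+1), i ≤ k → α i < β k := by
    intro i k hik
    rcases eq_or_lt_of_le hik with rfl | h
    · exact hαβ i
    · exact lt_trans (hαmono h) (hαβ k)
  have hαβne : ∀ i k : Fin (n+1), α i - β k ≠ 0 := by
    intro i k
    rcases le_or_gt i k with h | h
    · exact sub_ne_zero.mpr (ne_of_lt (hαltβ i k h))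
    · exact sub_ne_zero.mpr (ne_of_gt (hβltα k i h))
  have hβαne : ∀ k i : Fin (n+1), β k - α i ≠ 0 := by
    intro k i; have := hαβne i k; intro h; apply this; linarith [sub_eq_zero.mp h]
  have hαinj : Function.Injective α := hαmono.injective
  have hβmono : StrictMono β := by
    intro k j hkj
    exact lt_trans (hβltα k j hkj) (hαβ j)
  have hβinj : Function.Injective β := hβmono.injective
  have hααne : ∀ (j : Fin (n+1)), ∀ i ∈ Finset.univ.erase j, α i - α j ≠ 0 := by
    intro j i hi
    exact sub_ne_zero.mpr (fun h => (Finset.mem_erase.mp hi).1 (hαinj h))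
  -- the coefficients d j = ρ j * α j satisfy the interpolation hypothesis
  have hd : ∀ j, (ρ j * α j) * ∏ i ∈ Finset.univ.erase j, (α j - α i)
      = (∏ i, (α j - α i)) - ∏ i, (α j - β i) := by
    intro j
    have hzero : (∏ i, (α j - α i)) = 0 :=
      Finset.prod_eq_zero (Finset.mem_univ j) (by ring)
    rw [hzero, zero_sub]
    have hsplit : (∏ i, (α j - β i)) = (α j - β j) * ∏ i ∈ Finset.univ.erase j, (α j - β i) :=
      (Finset.mul_prod_erase _ _ (Finset.mem_univ j)).symm
    have hαj : α j ≠ 0 := ne_of_gt (hαpos j)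
    have hρα : ρ j * α j = (β j - α j) *
        ∏ i ∈ Finset.univ.erase j, (β i - α j) / (α i - α j) := by
      rw [hρ j]; field_simp
    have hP : (∏ i ∈ Finset.univ.erase j, (β i - α j) / (α i - α j))
        * ∏ i ∈ Finset.univ.erase j, (α j - α i)
        = ∏ i ∈ Finset.univ.erase j, (α j - β i) := by
      rw [← Finset.prod_mul_distrib]
      refine Finset.prod_congr rfl (fun i hi => ?_)
      rw [div_mul_eq_mul_div, div_eq_iff (hααne j i hi)]
      ring
    rw [hρα, hsplit, mul_assoc, hP]
    ring
  have hsol : ∀ k, 1 + ∑ j, ρ j * α j / (α j - β k) = 0 := by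
    intro k
    have hinterp := nodal_interp hm β hαinj (fun j => ρ j * α j) hd (β k)
    have hβzero : (∏ i, (β k - β i)) = 0 :=
      Finset.prod_eq_zero (Finset.mem_univ k) (by ring)
    rw [hβzero, sub_zero] at hinterp
    -- divide through by ∏ i, (β k - α i)
    have hfull : (∏ i, (β k - α i)) ≠ 0 :=
      Finset.prod_ne_zero_iff.mpr (fun i _ => hβαne k i)
    have hterm : ∀ j : Fin (n+1), ρ j * α j * ∏ i ∈ Finset.univ.erase j, (β k - α i)
        = (ρ j * α j / (β k - α j)) * ∏ i, (β k - α i) := by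
      intro j
      rw [← Finset.mul_prod_erase _ _ (Finset.mem_univ j), div_mul_eq_mul_div,
        eq_div_iff (hβαne k j)]
      ring
    rw [Finset.sum_congr rfl (fun j _ => hterm j), ← Finset.sum_mul] at hinterp
    have hsum : (∑ j, ρ j * α j / (β k - α j)) = 1 :=
      mul_right_cancel₀ hfull (by rw [hinterp]; ring)
    have hflip : ∀ j : Fin (n+1), ρ j * α j / (α j - β k) = -(ρ j * α j / (β k - α j)) := by
      intro j
      rw [← div_neg]
      congr 1
      ring
    rw [Finset.sum_congr rfl (fun j _ => hflip j), Finset.sum_neg_distrib, hsum]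
    ring
  refine ⟨hsol, fun ρ' hρ' => ?_⟩
  -- uniqueness
  have hdiff : ∀ k, ∑ j, ((ρ' j - ρ j) * α j) * ∏ i ∈ Finset.univ.erase j, (β k - α i) = 0 := by
    intro k
    have hfull : (∏ i, (β k - α i)) ≠ 0 :=
      Finset.prod_ne_zero_iff.mpr (fun i _ => hβαne k i)
    have hterm : ∀ j : Fin (n+1), ((ρ' j - ρ j) * α j) * ∏ i ∈ Finset.univ.erase j, (β k - α i)
        = ((ρ' j * α j / (α j - β k)) - (ρ j * α j / (α j - β k))) * -(∏ i, (β k - α i)) := by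
      intro j
      rw [← Finset.mul_prod_erase _ _ (Finset.mem_univ j), div_sub_div_same]
      rw [div_mul_eq_mul_div]
      rw [eq_div_iff (hαβne j k)]
      ring
    rw [Finset.sum_congr rfl (fun j _ => hterm j), ← Finset.sum_mul]
    have h1 := hρ' k
    have h2 := hsol k
    have : (∑ j, (ρ' j * α j / (α j - β k) - ρ j * α j / (α j - β k))) = 0 := by
      rw [Finset.sum_sub_distrib]
      linarith
    rw [this, zero_mul]
  have hvan := nodal_vanish hm hαinj hβinj (fun j => (ρ' j - ρ j) * α j) hdiff
  funext j
  have := hvan j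
  have hprod : (∏ i ∈ Finset.univ.erase j, (α j - α i)) ≠ 0 :=
    Finset.prod_ne_zero_iff.mpr (fun i hi => by
      have := hααne j i hi
      intro h; apply this; linarith [sub_eq_zero.mp h])
  have hαj : α j ≠ 0 := ne_of_gt (hαpos j)
  have h0 : (ρ' j - ρ j) * α j = 0 := by
    rcases mul_eq_zero.mp this with h | h
    · exact h
    · exact absurd h hprod
  rcases mul_eq_zero.mp h0 with h | h
  · linarith [sub_eq_zero.mp h]
  · exact absurd h hαj
end

section
/- Let m ≥ 1 and let α̃_1, ..., α̃_m, β̃_1, ..., β̃_m be positive real numbers satisfying the interlacing conditions α̃_j < β̃_j < α̃_{j+1} for j ∈ {1, ..., m−1} and α̃_m < β̃_m < ∞. Then there exist positive real numbers c_1, ..., c_m such that the function F(λ) = 1 + Σ_{j=1}^m c_j α̃_j/(α̃_j − λ), defined for λ ∈ ℝ \ {α̃_1, ..., α̃_m}, has zero set exactly {β̃_1, ..., β̃_m}, i.e. {λ ∈ ℝ \ {α̃_1, ..., α̃_m} : F(λ) = 0} = {β̃_1, ..., β̃_m}. -/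
open Polynomial Finset

theorem exists_coefficients_with_prescribed_zeros
    (m : ℕ) (hm : 1 ≤ m) (α β : Fin m → ℝ)
    (hαpos : ∀ j, 0 < α j) (hβpos : ∀ j, 0 < β j)
    (hαβ : ∀ j, α j < β j)
    (hβα : ∀ (j : Fin m) (hj : (j : ℕ) + 1 < m), β j < α ⟨(j : ℕ) + 1, hj⟩) :
    ∃ c : Fin m → ℝ, (∀ j, 0 < c j) ∧
      {lam : ℝ | (∀ j, lam ≠ α j) ∧ 1 + ∑ j, c j * α j / (α j - lam) = 0} =
        Set.range β := by
  classical
  obtain ⟨n, rfl⟩ : ∃ n, m = n + 1 := ⟨m - 1, (Nat.succ_pred_eq_of_pos hm).symm⟩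
  have hmono : StrictMono α := by
    rw [Fin.strictMono_iff_lt_succ]
    intro i
    have hj : ((i.castSucc : ℕ) + 1) < n + 1 := by
      simp
    have h2 := hβα i.castSucc hj
    have he : α ⟨(i.castSucc : ℕ) + 1, hj⟩ = α i.succ := by
      congr 1
    exact (hαβ _).trans (he ▸ h2)
  have hβα' : ∀ j k : Fin (n+1), (k:ℕ) < (j:ℕ) → β k < α j := by
    intro j k hkj
    have hj : (k:ℕ) + 1 < n + 1 := by omega
    have h2 := hβα k hj
    refine h2.trans_le (hmono.monotone ?_)
    rw [Fin.le_def]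
    exact hkj
  have hαβ' : ∀ j k : Fin (n+1), (j:ℕ) ≤ (k:ℕ) → α j < β k := by
    intro j k h
    exact lt_of_le_of_lt (hmono.monotone (Fin.le_def.mpr h)) (hαβ k)
  have hβne : ∀ j k : Fin (n+1), β j ≠ α k := by
    intro j k
    rcases lt_or_ge (j:ℕ) (k:ℕ) with h | h
    · exact (hβα' k j h).ne
    · exact (hαβ' k j h).ne'
  have hinj : Set.InjOn α (univ : Finset (Fin (n+1))) := hmono.injective.injOn
  -- the two polynomials
  set P : ℝ[X] := ∏ j, (X - C (β j)) with hPdef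
  set Q : ℝ[X] := ∏ j, (X - C (α j)) with hQdef
  have hPm : P.Monic := monic_prod_of_monic _ _ fun _ _ => monic_X_sub_C _
  have hQm : Q.Monic := monic_prod_of_monic _ _ fun _ _ => monic_X_sub_C _
  have hPd : P.degree = ((n+1 : ℕ) : WithBot ℕ) := by
    rw [hPdef, degree_prod]; simp
  have hQd : Q.degree = ((n+1 : ℕ) : WithBot ℕ) := by
    rw [hQdef, degree_prod]; simp
  have hcard : ((univ : Finset (Fin (n+1))).card) = n + 1 := by simp
  have hdeg : (P - Q).degree < (((univ : Finset (Fin (n+1))).card : ℕ) : WithBot ℕ) := by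
    rw [hcard]
    have h := degree_sub_lt (hPd.trans hQd.symm) hPm.ne_zero
      (by rw [hPm.leadingCoeff, hQm.leadingCoeff])
    rwa [hPd] at h
  have key := Lagrange.eq_interpolate (v := α) hinj hdeg
  -- the evaluated identity
  have keyev : ∀ lam : ℝ,
      (∏ k, (lam - β k)) - ∏ k, (lam - α k)
        = ∑ j, (∏ k, (α j - β k)) * ∏ k ∈ univ.erase j, ((α j - α k)⁻¹ * (lam - α k)) := by
    intro lam
    have h1 : eval lam (P - Q) = (∏ k, (lam - β k)) - ∏ k, (lam - α k) := by
      simp [hPdef, hQdef, eval_prod]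
    have h2 : eval lam (P - Q)
        = ∑ j, (∏ k, (α j - β k)) * ∏ k ∈ univ.erase j, ((α j - α k)⁻¹ * (lam - α k)) := by
      conv_lhs => rw [key]
      rw [Lagrange.interpolate_apply, eval_finset_sum]
      refine Finset.sum_congr rfl fun j _ => ?_
      rw [eval_mul, eval_C]
      congr 1
      · have hQ0 : eval (α j) Q = 0 := by
          rw [hQdef, eval_prod]
          exact Finset.prod_eq_zero (mem_univ j) (by simp)
        simp [hPdef, hQ0, eval_prod]
      · rw [Lagrange.basis, eval_prod]
        refine Finset.prod_congr rfl fun k _ => ?_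
        simp [Lagrange.basisDivisor]
    rw [← h1, h2]
  set e : Fin (n+1) → ℝ := fun j => ∏ k, (α j - β k) with he
  set w : Fin (n+1) → ℝ := fun j => ∏ k ∈ univ.erase j, (α j - α k)⁻¹ with hw
  -- negativity of the raw coefficients
  have hd : ∀ j, e j * w j < 0 := by
    intro j
    have hposf : ∀ k ∈ univ.erase j, 0 < (α j - β k) * (α j - α k)⁻¹ := by
      intro k hk
      have hkj : k ≠ j := (mem_erase.mp hk).1
      rcases lt_or_ge (k:ℕ) (j:ℕ) with h | h
      · exact mul_pos (sub_pos.mpr (hβα' j k h))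
          (inv_pos.mpr (sub_pos.mpr (hmono (Fin.lt_def.mpr h))))
      · have hlt : (j:ℕ) < (k:ℕ) := lt_of_le_of_ne h (fun hh => hkj (Fin.ext hh.symm))
        exact mul_pos_of_neg_of_neg (sub_neg.mpr (hαβ' j k hlt.le))
          (inv_lt_zero.mpr (sub_neg.mpr (hmono (Fin.lt_def.mpr hlt))))
    have hrw : e j * w j = (α j - β j) * ∏ k ∈ univ.erase j, ((α j - β k) * (α j - α k)⁻¹) := by
      rw [Finset.prod_mul_distrib, he, hw]
      simp only
      rw [← Finset.mul_prod_erase univ (fun k => α j - β k) (mem_univ j)]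
      ring
    rw [hrw]
    exact mul_neg_of_neg_of_pos (sub_neg.mpr (hαβ j)) (Finset.prod_pos hposf)
  -- the main identity for the rational function
  have hident : ∀ lam : ℝ, (∀ j, lam ≠ α j) →
      1 + ∑ j, -(e j * w j) / α j * α j / (α j - lam)
        = (∏ k, (lam - β k)) / ∏ k, (lam - α k) := by
    intro lam hne
    have hsub : ∀ j : Fin (n+1), lam - α j ≠ 0 := fun j => sub_ne_zero.mpr (hne j)
    have hQ0 : (∏ k, (lam - α k)) ≠ 0 := prod_ne_zero_iff.mpr fun k _ => hsub k
    have hterm : ∀ j : Fin (n+1),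
        (∏ k ∈ univ.erase j, ((α j - α k)⁻¹ * (lam - α k)))
          = w j * ((∏ k, (lam - α k)) / (lam - α j)) := by
      intro j
      rw [Finset.prod_mul_distrib]
      congr 1
      rw [eq_div_iff (hsub j), mul_comm]
      exact Finset.mul_prod_erase univ (fun k => lam - α k) (mem_univ j)
    have hk := keyev lam
    simp only [hterm] at hk
    have hk' : (∏ k, (lam - β k)) - ∏ k, (lam - α k)
        = (∑ j, e j * w j / (lam - α j)) * ∏ k, (lam - α k) := by
      rw [hk, Finset.sum_mul]
      refine Finset.sum_congr rfl fun j _ => ?_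
      rw [he]
      field_simp
    have hsum : ∑ j, e j * w j / (lam - α j)
        = (∏ k, (lam - β k)) / (∏ k, (lam - α k)) - 1 := by
      have hdiv : (∑ j, e j * w j / (lam - α j))
          = ((∏ k, (lam - β k)) - ∏ k, (lam - α k)) / ∏ k, (lam - α k) := by
        rw [eq_div_iff hQ0]
        exact hk'.symm
      rw [hdiv, sub_div, div_self hQ0]
    have hterm2 : ∀ j : Fin (n+1),
        -(e j * w j) / α j * α j / (α j - lam) = e j * w j / (lam - α j) := by
      intro j
      have h1 : α j ≠ 0 := (hαpos j).ne'
      have h2 : α j - lam ≠ 0 := sub_ne_zero.mpr (hne j).symm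
      rw [div_mul_cancel₀ _ h1, neg_div, ← div_neg, neg_sub]
    simp only [hterm2]
    rw [hsum]
    ring
  refine ⟨fun j => -(e j * w j) / α j,
    fun j => div_pos (neg_pos.mpr (hd j)) (hαpos j), ?_⟩
  ext lam
  simp only [Set.mem_setOf_eq, Set.mem_range]
  constructor
  · rintro ⟨hne, hF⟩
    rw [hident lam hne] at hF
    have hQ0 : (∏ k, (lam - α k)) ≠ 0 :=
      prod_ne_zero_iff.mpr fun k _ => sub_ne_zero.mpr (hne k)
    have hP0 : (∏ k, (lam - β k)) = 0 :=
      (div_eq_zero_iff.mp hF).resolve_right hQ0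
    obtain ⟨k, _, hk0⟩ := prod_eq_zero_iff.mp hP0
    exact ⟨k, (sub_eq_zero.mp hk0).symm⟩
  · rintro ⟨k, rfl⟩
    have hne : ∀ j, β k ≠ α j := fun j => hβne k j
    refine ⟨hne, ?_⟩
    rw [hident (β k) hne]
    exact div_eq_zero_iff.mpr (Or.inl (prod_eq_zero (mem_univ k) (by simp)))
end

section
/- Let n ≥ 1 and m ≥ 1 be integers and let τ_1, ..., τ_m be positive real numbers with Σ_{j=1}^m τ_j < 1. Then there exist axis-parallel open rectangular boxes F_1, ..., F_m in ℝ^n (each F_j being a product of n nonempty bounded open intervals) such that the closures of the F_j's are pairwise disjoint and all contained in the open unit cube (0,1)^n, and the n-dimensional Lebesgue measure of F_j equals τ_j for every j ∈ {1, ..., m}. -/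
open MeasureTheory

theorem exists_boxes_with_prescribed_volumes
    (n m : ℕ) (hn : 1 ≤ n) (hm : 1 ≤ m)
    (τ : Fin m → ℝ) (hτ : ∀ j, 0 < τ j) (hsum : ∑ j, τ j < 1) :
    ∃ a b : Fin m → Fin n → ℝ,
      (∀ j i, a j i < b j i) ∧
      (∀ j, closure (Set.univ.pi fun i => Set.Ioo (a j i) (b j i)) ⊆
        Set.univ.pi fun _ => Set.Ioo (0 : ℝ) 1) ∧
      (Pairwise fun j k =>
        Disjoint (closure (Set.univ.pi fun i => Set.Ioo (a j i) (b j i)))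
          (closure (Set.univ.pi fun i => Set.Ioo (a k i) (b k i)))) ∧
      (∀ j, volume (Set.univ.pi fun i => Set.Ioo (a j i) (b j i)) =
        ENNReal.ofReal (τ j)) := by
  obtain ⟨n', rfl⟩ : ∃ n', n = n' + 1 := ⟨n - 1, (Nat.succ_pred_eq_of_pos hn).symm⟩
  have hmF : Nonempty (Fin m) := ⟨⟨0, hm⟩⟩
  set S : ℝ := ∑ j, τ j with hSdef
  have hS0 : 0 < S := Finset.sum_pos (fun j _ => hτ j) Finset.univ_nonempty
  set t : ℝ := (S + 1) / 2 with htdef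
  have hSt : S < t := by rw [htdef]; linarith
  have ht1 : t < 1 := by rw [htdef]; linarith
  have ht0 : 0 < t := by rw [htdef]; linarith
  set r : ℝ := S / t with hrdef
  have hr0 : 0 < r := div_pos hS0 ht0
  have hr1 : r < 1 := (div_lt_one ht0).mpr hSt
  set w : ℝ := r ^ ((n' : ℝ)⁻¹) with hwdef
  have hw0 : 0 < w := Real.rpow_pos_of_pos hr0 _
  have hw1 : w ≤ 1 := Real.rpow_le_one hr0.le hr1.le (by positivity)
  have hw1' : n' ≠ 0 → w < 1 := fun hn' =>
    Real.rpow_lt_one hr0.le hr1 (by positivity)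
  set W : ℝ := w ^ n' with hWdef
  have hW0 : 0 < W := pow_pos hw0 _
  have hWr : n' ≠ 0 → W = r := by
    intro hn'
    rw [hWdef, hwdef, ← Real.rpow_natCast (r ^ ((n' : ℝ)⁻¹)) n',
      ← Real.rpow_mul hr0.le, inv_mul_cancel₀ (by exact_mod_cast hn'), Real.rpow_one]
  -- lengths along first coordinate
  set ℓ : ℕ → ℝ := fun k => if h : k < m then τ ⟨k, h⟩ / W else 0 with hℓdef
  have hℓ0 : ∀ k, 0 ≤ ℓ k := by
    intro k; rw [hℓdef]; dsimp only
    split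
    · exact (div_pos (hτ _) hW0).le
    · exact le_rfl
  have hℓj : ∀ j : Fin m, ℓ (j : ℕ) = τ j / W := by
    intro j; rw [hℓdef]; dsimp only; rw [dif_pos j.isLt]
  have hℓpos : ∀ j : Fin m, 0 < ℓ (j : ℕ) := by
    intro j; rw [hℓj]; exact div_pos (hτ j) hW0
  have hsumℓ : ∑ i ∈ Finset.range m, ℓ i ≤ t := by
    have h1 : ∑ i ∈ Finset.range m, ℓ i = ∑ j : Fin m, τ j / W := by
      rw [← Fin.sum_univ_eq_sum_range ℓ m]
      exact Finset.sum_congr rfl fun j _ => hℓj j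
    rw [h1, ← Finset.sum_div, ← hSdef]
    rcases Nat.eq_zero_or_pos n' with h | h
    · have : W = 1 := by rw [hWdef, h, pow_zero]
      rw [this, div_one]; exact hSt.le
    · rw [hWr h.ne', hrdef]
      rw [div_div_eq_mul_div, mul_comm, mul_div_assoc, div_self hS0.ne', mul_one]
  set g : ℝ := (1 - t) / (m + 1) with hgdef
  have hg0 : 0 < g := div_pos (by linarith) (by positivity)
  set A : ℕ → ℝ := fun k => (k + 1) * g + ∑ i ∈ Finset.range k, ℓ i with hAdef
  set B : ℕ → ℝ := fun k => A k + ℓ k with hBdef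
  have hAB : ∀ j : Fin m, A j < B j := fun j => by
    rw [hBdef]; dsimp only; linarith [hℓpos j]
  have hA0 : ∀ j : Fin m, 0 < A (j : ℕ) := by
    intro j; rw [hAdef]; dsimp only
    have : (0 : ℝ) ≤ ∑ i ∈ Finset.range (j : ℕ), ℓ i :=
      Finset.sum_nonneg fun i _ => hℓ0 i
    have : (0 : ℝ) < ((j : ℕ) + 1) * g := by positivity
    linarith
  have hB1 : ∀ j : Fin m, B (j : ℕ) < 1 := by
    intro j
    rw [hBdef, hAdef]; dsimp only
    have hsub : ∑ i ∈ Finset.range (j : ℕ), ℓ i + ℓ (j : ℕ)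
        = ∑ i ∈ Finset.range ((j : ℕ) + 1), ℓ i := (Finset.sum_range_succ ℓ _).symm
    have hle : ∑ i ∈ Finset.range ((j : ℕ) + 1), ℓ i ≤ ∑ i ∈ Finset.range m, ℓ i :=
      Finset.sum_le_sum_of_subset_of_nonneg
        (Finset.range_subset_range.mpr j.isLt) (fun i _ _ => hℓ0 i)
    have hj1 : ((j : ℕ) + 1 : ℝ) ≤ m := by exact_mod_cast j.isLt
    have hmg : (m : ℝ) * g < 1 - t := by
      have h1t : (0 : ℝ) < 1 - t := by linarith
      have hm1 : (0 : ℝ) < (m : ℝ) + 1 := by positivity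
      rw [hgdef, mul_div_assoc', div_lt_iff₀ hm1]
      nlinarith
    have := hsumℓ
    nlinarith [hg0]
  have hgap : ∀ j k : Fin m, (j : ℕ) < (k : ℕ) → B (j : ℕ) < A (k : ℕ) := by
    intro j k hjk
    rw [hBdef, hAdef]; dsimp only
    have hsub : ∑ i ∈ Finset.range (j : ℕ), ℓ i + ℓ (j : ℕ)
        = ∑ i ∈ Finset.range ((j : ℕ) + 1), ℓ i := (Finset.sum_range_succ ℓ _).symm
    have hle : ∑ i ∈ Finset.range ((j : ℕ) + 1), ℓ i ≤ ∑ i ∈ Finset.range (k : ℕ), ℓ i :=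
      Finset.sum_le_sum_of_subset_of_nonneg
        (Finset.range_subset_range.mpr hjk) (fun i _ _ => hℓ0 i)
    have hj1 : ((j : ℕ) + 1 : ℝ) ≤ (k : ℕ) := by exact_mod_cast hjk
    nlinarith [hg0]
  -- define the boxes
  refine ⟨fun j i => if (i : ℕ) = 0 then A (j : ℕ) else (1 - w) / 2,
    fun j i => if (i : ℕ) = 0 then B (j : ℕ) else (1 + w) / 2, ?_, ?_, ?_, ?_⟩
  · intro j i
    by_cases h : (i : ℕ) = 0
    · simp only [h, if_true]; exact hAB j
    · simp only [h, if_false]; linarith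
  · intro j x hx i _
    have hlt : ∀ i : Fin (n' + 1),
        (if (i : ℕ) = 0 then A (j : ℕ) else (1 - w) / 2)
          < (if (i : ℕ) = 0 then B (j : ℕ) else (1 + w) / 2) := by
      intro i
      by_cases h : (i : ℕ) = 0
      · simp only [h, if_true]; exact hAB j
      · simp only [h, if_false]; linarith
    rw [closure_pi_set] at hx
    have hxi := hx i (Set.mem_univ i)
    dsimp only at hxi
    rw [closure_Ioo (hlt i).ne] at hxi
    by_cases h : (i : ℕ) = 0
    · simp only [h, if_true] at hxi
      exact ⟨lt_of_lt_of_le (hA0 j) hxi.1, lt_of_le_of_lt hxi.2 (hB1 j)⟩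
    · simp only [h, if_false] at hxi
      have hn' : n' ≠ 0 := by
        have := i.isLt; omega
      have hw1'' := hw1' hn'
      constructor
      · calc (0 : ℝ) < (1 - w) / 2 := by linarith
          _ ≤ x i := hxi.1
      · calc x i ≤ (1 + w) / 2 := hxi.2
          _ < 1 := by linarith
  · intro j k hjk
    have key : ∀ j' k' : Fin m, (j' : ℕ) < (k' : ℕ) →
        Disjoint
          (closure (Set.univ.pi fun i : Fin (n' + 1) =>
            Set.Ioo (if (i : ℕ) = 0 then A (j' : ℕ) else (1 - w) / 2)
              (if (i : ℕ) = 0 then B (j' : ℕ) else (1 + w) / 2)))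
          (closure (Set.univ.pi fun i : Fin (n' + 1) =>
            Set.Ioo (if (i : ℕ) = 0 then A (k' : ℕ) else (1 - w) / 2)
              (if (i : ℕ) = 0 then B (k' : ℕ) else (1 + w) / 2))) := by
      intro j' k' hlt'
      rw [Set.disjoint_left]
      intro x hxj hxk
      rw [closure_pi_set] at hxj hxk
      have h0 : ((0 : Fin (n' + 1)) : ℕ) = 0 := rfl
      have hj0 := hxj (0 : Fin (n' + 1)) (Set.mem_univ _)
      have hk0 := hxk (0 : Fin (n' + 1)) (Set.mem_univ _)
      simp only [h0, if_true] at hj0 hk0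
      have hj0' : x 0 ∈ Set.Icc (A (j' : ℕ)) (B (j' : ℕ)) := by
        rwa [closure_Ioo (hAB j').ne] at hj0
      have hk0' : x 0 ∈ Set.Icc (A (k' : ℕ)) (B (k' : ℕ)) := by
        rwa [closure_Ioo (hAB k').ne] at hk0
      have := hgap j' k' hlt'
      have h1 := hj0'.2
      have h2 := hk0'.1
      linarith
    rcases lt_or_gt_of_ne hjk with h | h
    · exact key j k h
    · exact (key k j h).symm
  · intro j
    rw [volume_pi_pi]
    have hfac : ∀ i : Fin (n' + 1),
        volume (Set.Ioo (if (i : ℕ) = 0 then A (j : ℕ) else (1 - w) / 2)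
          (if (i : ℕ) = 0 then B (j : ℕ) else (1 + w) / 2))
        = ENNReal.ofReal (if (i : ℕ) = 0 then ℓ (j : ℕ) else w) := by
      intro i
      by_cases h : (i : ℕ) = 0
      · simp only [h, if_true, Real.volume_Ioo]
        congr 1
        rw [hBdef]; ring
      · simp only [h, if_false, Real.volume_Ioo]
        congr 1
        ring
    rw [Finset.prod_congr rfl fun i _ => hfac i]
    rw [Fin.prod_univ_succ]
    have h0 : ((0 : Fin (n' + 1)) : ℕ) = 0 := rfl
    simp only [h0, if_true]
    have hsucc : ∀ i : Fin n', ((i.succ : Fin (n' + 1)) : ℕ) ≠ 0 := by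
      intro i; simp [Fin.val_succ]
    rw [Finset.prod_congr rfl fun i _ => by rw [if_neg (hsucc i)]]
    rw [Finset.prod_const, Finset.card_univ, Fintype.card_fin,
      ← ENNReal.ofReal_pow hw0.le, ← ENNReal.ofReal_mul (hℓ0 _)]
    congr 1
    rw [hℓj j, ← hWdef, div_mul_cancel₀ _ hW0.ne']
end
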